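/- (Conservation law with instantaneous information) Let (X^n, Y^n) be jointly distributed random sequences with finite alphabets. Then I(X^n→Y^n) + I(Y^n→X^n) = I(X^n; Y^n) + I(X^n→Y^n‖DX^n). -/
import Mathlib


open Finset

noncomputable section

-- Probability of the event `E` under the pmf `p` on a finite sample space `Ω`.
open Classical in
def pr {Ω : Type*} [Fintype Ω] (p : Ω → ℝ) (E : Ω → Prop) : ℝ :=
  ∑ ω, if E ω then p ω else 0

-- Shannon entropy `H(U)` (pointwise form).
def entropy {Ω α : Type*} [Fintype Ω] (p : Ω → ℝ) (U : Ω → α) : ℝ :=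
  -∑ ω, p ω * Real.log (pr p (fun ω' => U ω' = U ω))

-- Conditional Shannon entropy `H(U | V)`.
def condEntropy {Ω α β : Type*} [Fintype Ω] (p : Ω → ℝ) (U : Ω → α) (V : Ω → β) : ℝ :=
  -∑ ω, p ω * Real.log
      (pr p (fun ω' => U ω' = U ω ∧ V ω' = V ω) / pr p (fun ω' => V ω' = V ω))

-- Mutual information `I(U ; V)`.
def mutualInfo {Ω α β : Type*} [Fintype Ω] (p : Ω → ℝ) (U : Ω → α) (V : Ω → β) : ℝ :=
  ∑ ω, p ω * Real.log
      (pr p (fun ω' => U ω' = U ω ∧ V ω' = V ω) /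
        (pr p (fun ω' => U ω' = U ω) * pr p (fun ω' => V ω' = V ω)))

-- Conditional mutual information `I(U ; V | W)`.
def condMutualInfo {Ω α β γ : Type*} [Fintype Ω] (p : Ω → ℝ)
    (U : Ω → α) (V : Ω → β) (W : Ω → γ) : ℝ :=
  ∑ ω, p ω * Real.log
      ((pr p (fun ω' => U ω' = U ω ∧ V ω' = V ω ∧ W ω' = W ω) *
          pr p (fun ω' => W ω' = W ω)) /
        (pr p (fun ω' => U ω' = U ω ∧ W ω' = W ω) *
          pr p (fun ω' => V ω' = V ω ∧ W ω' = W ω)))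

-- The prefix `(X_0, …, X_{i-1})` of a random sequence `X`.
def prefixSeq {Ω 𝒳 : Type*} (X : Ω → ℕ → 𝒳) (i : ℕ) : Ω → (Fin i → 𝒳) :=
  fun ω j => X ω (j : ℕ)

-- Directed information `I(X^n → Y^n) = ∑_{i=1}^n I(X^i ; Y_i | Y^{i-1})` (0-indexed).
def directedInfo {Ω 𝒳 𝒴 : Type*} [Fintype Ω] (p : Ω → ℝ)
    (X : Ω → ℕ → 𝒳) (Y : Ω → ℕ → 𝒴) (n : ℕ) : ℝ :=
  ∑ i ∈ Finset.range n,
    condMutualInfo p (prefixSeq X (i + 1)) (fun ω => Y ω i) (prefixSeq Y i)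

/-! ### Auxiliary lemmas -/

lemma pr_congr' {Ω : Type*} [Fintype Ω] (p : Ω → ℝ) {E F : Ω → Prop}
    (h : ∀ ω, E ω ↔ F ω) : pr p E = pr p F := by
  classical
  unfold pr
  refine Finset.sum_congr rfl fun ω _ => ?_
  by_cases hE : E ω
  · rw [if_pos hE, if_pos ((h ω).mp hE)]
  · rw [if_neg hE, if_neg (fun hF => hE ((h ω).mpr hF))]

lemma pr_pos' {Ω : Type*} [Fintype Ω] {p : Ω → ℝ} (hp0 : ∀ ω, 0 ≤ p ω)
    {E : Ω → Prop} {ω : Ω} (hE : E ω) (hω : 0 < p ω) : 0 < pr p E := by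
  classical
  have h1 : (if E ω then p ω else 0) ≤ pr p E := by
    unfold pr
    exact Finset.single_le_sum (f := fun ω' => if E ω' then p ω' else 0)
      (fun ω' _ => by by_cases h : E ω' <;> simp [h, hp0 ω']) (Finset.mem_univ ω)
  rw [if_pos hE] at h1
  linarith

lemma prefix_succ_iff' {Ω 𝒳 : Type*} (X : Ω → ℕ → 𝒳) (i : ℕ) (ω' ω : Ω) :
    prefixSeq X (i+1) ω' = prefixSeq X (i+1) ω ↔
      (X ω' i = X ω i ∧ prefixSeq X i ω' = prefixSeq X i ω) := by
  constructor
  · intro h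
    have h' := funext_iff.mp h
    exact ⟨h' ⟨i, Nat.lt_succ_self i⟩, funext fun j => h' ⟨j, Nat.lt_succ_of_lt j.isLt⟩⟩
  · rintro ⟨h1, h2⟩
    funext j
    rcases Nat.lt_succ_iff_lt_or_eq.mp j.isLt with hj | hj
    · exact funext_iff.mp h2 ⟨j, hj⟩
    · show X ω' (j : ℕ) = X ω (j : ℕ)
      rw [hj]; exact h1

lemma prefix_zero_eq' {Ω 𝒳 : Type*} (X : Ω → ℕ → 𝒳) (ω' ω : Ω) :
    prefixSeq X 0 ω' = prefixSeq X 0 ω := funext fun j => j.elim0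

lemma log4' {a b c d : ℝ} (ha : 0 < a) (hb : 0 < b) (hc : 0 < c) (hd : 0 < d) :
    Real.log (a * b / (c * d)) =
      Real.log a + Real.log b - Real.log c - Real.log d := by
  rw [Real.log_div (by positivity) (by positivity), Real.log_mul ha.ne' hb.ne',
    Real.log_mul hc.ne' hd.ne']
  ring

lemma key' (J : ℕ → ℕ → ℝ) (hpos : ∀ a b, 0 < J a b) (h00 : J 0 0 = 1) (n : ℕ) :
    ∑ i ∈ Finset.range n,
        Real.log (J (i+1) (i+1) * J 0 i / (J (i+1) i * J 0 (i+1)))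
      + ∑ i ∈ Finset.range n,
        Real.log (J (i+1) (i+1) * J i 0 / (J i (i+1) * J (i+1) 0))
      = Real.log (J n n / (J n 0 * J 0 n))
      + ∑ i ∈ Finset.range n,
        Real.log (J (i+1) (i+1) * J i i / (J (i+1) i * J i (i+1))) := by
  induction n with
  | zero => simp [h00]
  | succ n ih =>
    rw [Finset.sum_range_succ, Finset.sum_range_succ, Finset.sum_range_succ]
    rw [log4' (hpos _ _) (hpos _ _) (hpos _ _) (hpos _ _),
      log4' (hpos _ _) (hpos _ _) (hpos _ _) (hpos _ _),
      log4' (hpos _ _) (hpos _ _) (hpos _ _) (hpos _ _)]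
    have e1 : Real.log (J (n+1) (n+1) / (J (n+1) 0 * J 0 (n+1))) =
        Real.log (J (n+1) (n+1)) - Real.log (J (n+1) 0) - Real.log (J 0 (n+1)) := by
      rw [Real.log_div (hpos _ _).ne' (mul_pos (hpos _ _) (hpos _ _)).ne',
        Real.log_mul (hpos _ _).ne' (hpos _ _).ne']; ring
    have e2 : Real.log (J n n / (J n 0 * J 0 n)) =
        Real.log (J n n) - Real.log (J n 0) - Real.log (J 0 n) := by
      rw [Real.log_div (hpos _ _).ne' (mul_pos (hpos _ _) (hpos _ _)).ne',
        Real.log_mul (hpos _ _).ne' (hpos _ _).ne']; ring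
    rw [e1]
    rw [e2] at ih
    linarith

def Jp {Ω 𝒳 𝒴 : Type*} [Fintype Ω] (p : Ω → ℝ) (X : Ω → ℕ → 𝒳) (Y : Ω → ℕ → 𝒴)
    (ω : Ω) (a b : ℕ) : ℝ :=
  pr p (fun ω' => prefixSeq X a ω' = prefixSeq X a ω ∧ prefixSeq Y b ω' = prefixSeq Y b ω)

/-- conservation law with instantaneous information:
`I(X^n→Y^n) + I(Y^n→X^n) = I(X^n; Y^n) + I(X^n→Y^n‖DX^n)`, where the
instantaneous information is `I(X^n→Y^n‖DX^n) = Σ_{i=1}^n I(X_i; Y_i | X^{i-1}, Y^{i-1})`. -/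
theorem conservation_with_instantaneous
    {Ω 𝒳 𝒴 : Type*} [Fintype Ω] [Fintype 𝒳] [Fintype 𝒴]
    (p : Ω → ℝ) (hp0 : ∀ ω, 0 ≤ p ω) (hp1 : ∑ ω, p ω = 1)
    (X : Ω → ℕ → 𝒳) (Y : Ω → ℕ → 𝒴) (n : ℕ) :
    directedInfo p X Y n + directedInfo p Y X n =
      mutualInfo p (prefixSeq X n) (prefixSeq Y n) +
        ∑ i ∈ Finset.range n,
          condMutualInfo p (fun ω => X ω i) (fun ω => Y ω i)
            (fun ω => (prefixSeq X i ω, prefixSeq Y i ω)) := by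
  classical
  set J : Ω → ℕ → ℕ → ℝ := Jp p X Y with hJ
  -- rewrite the X→Y directed terms
  have dXY : ∀ i, condMutualInfo p (prefixSeq X (i+1)) (fun ω => Y ω i) (prefixSeq Y i)
      = ∑ ω, p ω * Real.log
          (J ω (i+1) (i+1) * J ω 0 i / (J ω (i+1) i * J ω 0 (i+1))) := by
    intro i
    unfold condMutualInfo
    refine Finset.sum_congr rfl fun ω _ => ?_
    have h1 : pr p (fun ω' => prefixSeq X (i+1) ω' = prefixSeq X (i+1) ω ∧
        Y ω' i = Y ω i ∧ prefixSeq Y i ω' = prefixSeq Y i ω) = J ω (i+1) (i+1) :=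
      pr_congr' p fun ω' => ⟨fun ⟨hx, hy⟩ => ⟨hx, (prefix_succ_iff' Y i ω' ω).mpr hy⟩,
        fun ⟨hx, hy⟩ => ⟨hx, (prefix_succ_iff' Y i ω' ω).mp hy⟩⟩
    have h2 : pr p (fun ω' => prefixSeq Y i ω' = prefixSeq Y i ω) = J ω 0 i :=
      pr_congr' p fun ω' => ⟨fun h => ⟨prefix_zero_eq' X ω' ω, h⟩, fun h => h.2⟩
    have h4 : pr p (fun ω' => Y ω' i = Y ω i ∧ prefixSeq Y i ω' = prefixSeq Y i ω)
        = J ω 0 (i+1) :=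
      pr_congr' p fun ω' => ⟨fun h => ⟨prefix_zero_eq' X ω' ω, (prefix_succ_iff' Y i ω' ω).mpr h⟩,
        fun h => (prefix_succ_iff' Y i ω' ω).mp h.2⟩
    rw [h1, h2, h4]
    rfl
  -- rewrite the Y→X directed terms
  have dYX : ∀ i, condMutualInfo p (prefixSeq Y (i+1)) (fun ω => X ω i) (prefixSeq X i)
      = ∑ ω, p ω * Real.log
          (J ω (i+1) (i+1) * J ω i 0 / (J ω i (i+1) * J ω (i+1) 0)) := by
    intro i
    unfold condMutualInfo
    refine Finset.sum_congr rfl fun ω _ => ?_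
    have h1 : pr p (fun ω' => prefixSeq Y (i+1) ω' = prefixSeq Y (i+1) ω ∧
        X ω' i = X ω i ∧ prefixSeq X i ω' = prefixSeq X i ω) = J ω (i+1) (i+1) :=
      pr_congr' p fun ω' => ⟨fun ⟨hy, hx⟩ => ⟨(prefix_succ_iff' X i ω' ω).mpr hx, hy⟩,
        fun ⟨hx, hy⟩ => ⟨hy, (prefix_succ_iff' X i ω' ω).mp hx⟩⟩
    have h2 : pr p (fun ω' => prefixSeq X i ω' = prefixSeq X i ω) = J ω i 0 :=
      pr_congr' p fun ω' => ⟨fun h => ⟨h, prefix_zero_eq' Y ω' ω⟩, fun h => h.1⟩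
    have h3 : pr p (fun ω' => prefixSeq Y (i+1) ω' = prefixSeq Y (i+1) ω ∧
        prefixSeq X i ω' = prefixSeq X i ω) = J ω i (i+1) :=
      pr_congr' p fun ω' => ⟨fun h => ⟨h.2, h.1⟩, fun h => ⟨h.2, h.1⟩⟩
    have h4 : pr p (fun ω' => X ω' i = X ω i ∧ prefixSeq X i ω' = prefixSeq X i ω)
        = J ω (i+1) 0 :=
      pr_congr' p fun ω' => ⟨fun h => ⟨(prefix_succ_iff' X i ω' ω).mpr h, prefix_zero_eq' Y ω' ω⟩,
        fun h => (prefix_succ_iff' X i ω' ω).mp h.1⟩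
    rw [h1, h2, h3, h4]
  -- rewrite the instantaneous terms
  have dI : ∀ i, condMutualInfo p (fun ω => X ω i) (fun ω => Y ω i)
        (fun ω => (prefixSeq X i ω, prefixSeq Y i ω))
      = ∑ ω, p ω * Real.log
          (J ω (i+1) (i+1) * J ω i i / (J ω (i+1) i * J ω i (i+1))) := by
    intro i
    unfold condMutualInfo
    refine Finset.sum_congr rfl fun ω _ => ?_
    have pe : ∀ ω', ((prefixSeq X i ω', prefixSeq Y i ω')
          = (prefixSeq X i ω, prefixSeq Y i ω)) ↔
        (prefixSeq X i ω' = prefixSeq X i ω ∧ prefixSeq Y i ω' = prefixSeq Y i ω) :=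
      fun ω' => by simp [Prod.ext_iff]
    have h1 : pr p (fun ω' => X ω' i = X ω i ∧ Y ω' i = Y ω i ∧
        (prefixSeq X i ω', prefixSeq Y i ω') = (prefixSeq X i ω, prefixSeq Y i ω))
        = J ω (i+1) (i+1) :=
      pr_congr' p fun ω' => ⟨fun ⟨hx, hy, hw⟩ =>
          ⟨(prefix_succ_iff' X i ω' ω).mpr ⟨hx, ((pe ω').mp hw).1⟩,
           (prefix_succ_iff' Y i ω' ω).mpr ⟨hy, ((pe ω').mp hw).2⟩⟩,
        fun ⟨hx, hy⟩ => ⟨((prefix_succ_iff' X i ω' ω).mp hx).1,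
          ((prefix_succ_iff' Y i ω' ω).mp hy).1,
          (pe ω').mpr ⟨((prefix_succ_iff' X i ω' ω).mp hx).2,
            ((prefix_succ_iff' Y i ω' ω).mp hy).2⟩⟩⟩
    have h2 : pr p (fun ω' =>
        (prefixSeq X i ω', prefixSeq Y i ω') = (prefixSeq X i ω, prefixSeq Y i ω))
        = J ω i i := pr_congr' p fun ω' => pe ω'
    have h3 : pr p (fun ω' => X ω' i = X ω i ∧
        (prefixSeq X i ω', prefixSeq Y i ω') = (prefixSeq X i ω, prefixSeq Y i ω))
        = J ω (i+1) i :=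
      pr_congr' p fun ω' => ⟨fun ⟨hx, hw⟩ =>
          ⟨(prefix_succ_iff' X i ω' ω).mpr ⟨hx, ((pe ω').mp hw).1⟩, ((pe ω').mp hw).2⟩,
        fun ⟨hx, hy⟩ => ⟨((prefix_succ_iff' X i ω' ω).mp hx).1,
          (pe ω').mpr ⟨((prefix_succ_iff' X i ω' ω).mp hx).2, hy⟩⟩⟩
    have h4 : pr p (fun ω' => Y ω' i = Y ω i ∧
        (prefixSeq X i ω', prefixSeq Y i ω') = (prefixSeq X i ω, prefixSeq Y i ω))
        = J ω i (i+1) :=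
      pr_congr' p fun ω' => ⟨fun ⟨hy, hw⟩ =>
          ⟨((pe ω').mp hw).1, (prefix_succ_iff' Y i ω' ω).mpr ⟨hy, ((pe ω').mp hw).2⟩⟩,
        fun ⟨hx, hy⟩ => ⟨((prefix_succ_iff' Y i ω' ω).mp hy).1,
          (pe ω').mpr ⟨hx, ((prefix_succ_iff' Y i ω' ω).mp hy).2⟩⟩⟩
    rw [h1, h2, h3, h4]
  -- rewrite the mutual information
  have dM : mutualInfo p (prefixSeq X n) (prefixSeq Y n)
      = ∑ ω, p ω * Real.log (J ω n n / (J ω n 0 * J ω 0 n)) := by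
    unfold mutualInfo
    refine Finset.sum_congr rfl fun ω _ => ?_
    have h2 : pr p (fun ω' => prefixSeq X n ω' = prefixSeq X n ω) = J ω n 0 :=
      pr_congr' p fun ω' => ⟨fun h => ⟨h, prefix_zero_eq' Y ω' ω⟩, fun h => h.1⟩
    have h3 : pr p (fun ω' => prefixSeq Y n ω' = prefixSeq Y n ω) = J ω 0 n :=
      pr_congr' p fun ω' => ⟨fun h => ⟨prefix_zero_eq' X ω' ω, h⟩, fun h => h.2⟩
    rw [h2, h3]
    rfl
  have h00 : ∀ ω, J ω 0 0 = 1 := by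
    intro ω
    rw [← hp1]
    show pr p _ = _
    unfold pr
    exact Finset.sum_congr rfl fun ω' _ =>
      if_pos ⟨prefix_zero_eq' X ω' ω, prefix_zero_eq' Y ω' ω⟩
  have hJpos : ∀ ω, 0 < p ω → ∀ a b, 0 < J ω a b :=
    fun ω hω a b => pr_pos' hp0 ⟨rfl, rfl⟩ hω
  have EX : directedInfo p X Y n = ∑ ω, ∑ i ∈ Finset.range n,
      p ω * Real.log (J ω (i+1) (i+1) * J ω 0 i / (J ω (i+1) i * J ω 0 (i+1))) := by
    unfold directedInfo
    rw [Finset.sum_congr rfl fun i _ => dXY i]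
    exact Finset.sum_comm
  have EY : directedInfo p Y X n = ∑ ω, ∑ i ∈ Finset.range n,
      p ω * Real.log (J ω (i+1) (i+1) * J ω i 0 / (J ω i (i+1) * J ω (i+1) 0)) := by
    unfold directedInfo
    rw [Finset.sum_congr rfl fun i _ => dYX i]
    exact Finset.sum_comm
  have EI : (∑ i ∈ Finset.range n, condMutualInfo p (fun ω => X ω i) (fun ω => Y ω i)
        (fun ω => (prefixSeq X i ω, prefixSeq Y i ω)))
      = ∑ ω, ∑ i ∈ Finset.range n,
        p ω * Real.log (J ω (i+1) (i+1) * J ω i i / (J ω (i+1) i * J ω i (i+1))) := by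
    rw [Finset.sum_congr rfl fun i _ => dI i]
    exact Finset.sum_comm
  rw [EX, EY, EI, dM, ← Finset.sum_add_distrib, ← Finset.sum_add_distrib]
  refine Finset.sum_congr rfl fun ω _ => ?_
  rcases (hp0 ω).eq_or_lt with h0 | h0
  · simp [← h0]
  · rw [← Finset.mul_sum, ← Finset.mul_sum, ← Finset.mul_sum, ← mul_add, ← mul_add]
    congr 1
    exact key' (J ω) (hJpos ω h0) (h00 ω) n
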